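/- Let θ be purely imaginary with positive imaginary part, N ≥ 2 an integer, and t ∈ ℤ. Then i·e^{tπi/(2N)} · g_{(1/2, t/N)}(θ) / g_{(0, 1/N)}(θ) is a real number, where g denotes the Siegel function. -/

import Mathlib

open Complex

private lemma mult_aux {q : ℝ} (hq0 : 0 ≤ q) (hq1 : q < 1) (a : ℂ) (ha : q * ‖a‖ < 1) :
    Multipliable (fun n : ℕ => 1 - (q : ℂ) ^ (n + 1) * a) := by
  have hr0 : 0 ≤ q * ‖a‖ := mul_nonneg hq0 (norm_nonneg a)
  have hbound : ∀ n : ℕ, ‖(q : ℂ) ^ (n + 1) * a‖ ≤ q ^ n * (q * ‖a‖) := by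
    intro n
    rw [norm_mul, norm_pow, Complex.norm_real, Real.norm_eq_abs, _root_.abs_of_nonneg hq0]
    rw [pow_succ]
    ring_nf
    nlinarith [pow_nonneg hq0 n, norm_nonneg a]
  have hlt : ∀ n : ℕ, ‖(q : ℂ) ^ (n + 1) * a‖ < 1 := by
    intro n
    refine lt_of_le_of_lt (hbound n) ?_
    calc q ^ n * (q * ‖a‖) ≤ 1 * (q * ‖a‖) := by
          gcongr; exact pow_le_one₀ hq0 hq1.le
      _ < 1 := by rwa [one_mul]
  have hne : ∀ n : ℕ, (1 : ℂ) - (q : ℂ) ^ (n + 1) * a ≠ 0 := by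
    intro n h
    rw [sub_eq_zero] at h
    have := hlt n
    rw [← h, norm_one] at this
    exact lt_irrefl 1 this
  have hsum : Summable (fun n : ℕ => Complex.log (1 - (q : ℂ) ^ (n + 1) * a)) := by
    set C : ℝ := (q * ‖a‖) ^ 2 * (1 - q * ‖a‖)⁻¹ / 2 + q * ‖a‖ with hC
    have hCpos : 0 ≤ C := by
      have : 0 ≤ (1 - q * ‖a‖)⁻¹ := inv_nonneg.2 (by linarith)
      positivity
    refine Summable.of_norm_bounded (g := fun n => C * q ^ n)
      ((summable_geometric_of_lt_one hq0 hq1).mul_left C) ?_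
    intro n
    have hz := hlt n
    have hzb := hbound n
    set z : ℂ := -((q : ℂ) ^ (n + 1) * a) with hzdef
    have hz' : ‖z‖ < 1 := by rwa [hzdef, norm_neg]
    have hz'' : ‖z‖ ≤ q ^ n * (q * ‖a‖) := by rwa [hzdef, norm_neg]
    have h1 : (1 : ℂ) - (q : ℂ) ^ (n + 1) * a = 1 + z := by rw [hzdef]; ring
    rw [h1]
    refine le_trans (Complex.norm_log_one_add_le hz') ?_
    have hq n' : (q:ℝ) ^ n' ≤ 1 := pow_le_one₀ hq0 hq1.le
    have hle1 : ‖z‖ ≤ q * ‖a‖ := le_trans hz'' (by nlinarith [hq n, hr0])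
    have hinv : (1 - ‖z‖)⁻¹ ≤ (1 - q * ‖a‖)⁻¹ := by
      apply inv_anti₀ (by linarith) (by linarith)
    have hzn : 0 ≤ ‖z‖ := norm_nonneg z
    have h2 : ‖z‖ ^ 2 * (1 - ‖z‖)⁻¹ / 2 ≤ (q ^ n * (q * ‖a‖)) * ((q * ‖a‖) * (1 - q * ‖a‖)⁻¹) / 2 := by
      have : ‖z‖ ^ 2 ≤ (q ^ n * (q * ‖a‖)) * (q * ‖a‖) := by nlinarith
      have h0 : (0:ℝ) ≤ (1 - q*‖a‖)⁻¹ := inv_nonneg.2 (by linarith)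
      have h0' : (0:ℝ) ≤ (1 - ‖z‖)⁻¹ := inv_nonneg.2 (by linarith)
      nlinarith [mul_le_mul_of_nonneg_left hinv (sq_nonneg ‖z‖)]
    rw [hC]
    have := hz''
    nlinarith [pow_nonneg hq0 n]
  exact Complex.multipliable_of_summable_log hsum

private lemma conj_tprod {f : ℕ → ℂ} (hf : Multipliable f) :
    (starRingEnd ℂ) (∏' n, f n) = ∏' n, (starRingEnd ℂ) (f n) :=
  hf.map_tprod (starRingEnd ℂ) continuous_conj

private lemma shift_id {q : ℝ} (hq0 : 0 < q) (hq1 : q < 1) {w : ℂ}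
    (hw1 : q * ‖w‖ < 1) (hw2 : q * ‖w⁻¹‖ < 1)
    (hconj : (starRingEnd ℂ) w = (q : ℂ) * w⁻¹) :
    (starRingEnd ℂ) (∏' n : ℕ, (1 - (q : ℂ) ^ (n + 1) * w) * (1 - (q : ℂ) ^ (n + 1) * w⁻¹))
        * (1 - (q : ℂ) * w⁻¹)
      = (∏' n : ℕ, (1 - (q : ℂ) ^ (n + 1) * w) * (1 - (q : ℂ) ^ (n + 1) * w⁻¹)) * (1 - w) := by
  have hqC : (q : ℂ) ≠ 0 := Complex.ofReal_ne_zero.2 hq0.ne'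
  have mF : Multipliable (fun n : ℕ => 1 - (q : ℂ) ^ (n + 1) * w⁻¹) := mult_aux hq0.le hq1 _ hw2
  have mG1 : Multipliable (fun n : ℕ => 1 - (q : ℂ) ^ (n + 1) * w) := mult_aux hq0.le hq1 _ hw1
  have mG : Multipliable (fun n : ℕ => 1 - (q : ℂ) ^ n * w) :=
    Multipliable.comp_nat_add (k := 1) mG1
  have mF1 : Multipliable (fun n : ℕ => 1 - (q : ℂ) ^ (n + 1 + 1) * w⁻¹) := by
    refine (mult_aux hq0.le hq1 ((q : ℂ) * w⁻¹) ?_).congr fun n => ?_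
    · rw [norm_mul, Complex.norm_real, Real.norm_eq_abs, _root_.abs_of_nonneg hq0.le]
      nlinarith [norm_nonneg (w⁻¹), mul_nonneg hq0.le (norm_nonneg (w⁻¹))]
    · ring
  have mf : Multipliable
      (fun n : ℕ => (1 - (q : ℂ) ^ (n + 1) * w) * (1 - (q : ℂ) ^ (n + 1) * w⁻¹)) := mG1.mul mF
  have hconjf : ∀ n : ℕ, (starRingEnd ℂ)
      ((1 - (q : ℂ) ^ (n + 1) * w) * (1 - (q : ℂ) ^ (n + 1) * w⁻¹))
      = (1 - (q : ℂ) ^ (n + 1 + 1) * w⁻¹) * (1 - (q : ℂ) ^ n * w) := by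
    intro n
    have h1 : (starRingEnd ℂ) (1 - (q : ℂ) ^ (n + 1) * w) = 1 - (q : ℂ) ^ (n + 1 + 1) * w⁻¹ := by
      simp only [map_sub, map_one, map_mul, map_pow, Complex.conj_ofReal, hconj]
      ring
    have h2 : (starRingEnd ℂ) (1 - (q : ℂ) ^ (n + 1) * w⁻¹) = 1 - (q : ℂ) ^ n * w := by
      simp only [map_sub, map_one, map_inv₀, map_mul, map_pow, Complex.conj_ofReal, hconj]
      rw [mul_inv, inv_inv, pow_succ]
      field_simp
    rw [map_mul, h1, h2]
  have h2 : (starRingEnd ℂ)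
      (∏' n : ℕ, (1 - (q : ℂ) ^ (n + 1) * w) * (1 - (q : ℂ) ^ (n + 1) * w⁻¹))
      = (∏' n : ℕ, (1 - (q : ℂ) ^ (n + 1 + 1) * w⁻¹)) * ∏' n : ℕ, (1 - (q : ℂ) ^ n * w) := by
    rw [conj_tprod mf, tprod_congr hconjf]
    exact Multipliable.tprod_mul mF1 mG
  have h1 : (∏' n : ℕ, (1 - (q : ℂ) ^ (n + 1) * w) * (1 - (q : ℂ) ^ (n + 1) * w⁻¹))
      = (∏' n : ℕ, (1 - (q : ℂ) ^ (n + 1) * w)) * ∏' n : ℕ, (1 - (q : ℂ) ^ (n + 1) * w⁻¹) :=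
    Multipliable.tprod_mul mG1 mF
  have h3 : (∏' n : ℕ, (1 - (q : ℂ) ^ (n + 1) * w⁻¹))
      = (1 - (q : ℂ) ^ (0 + 1) * w⁻¹) * ∏' n : ℕ, (1 - (q : ℂ) ^ (n + 1 + 1) * w⁻¹) :=
    tprod_eq_zero_mul' (f := fun n : ℕ => 1 - (q : ℂ) ^ (n + 1) * w⁻¹) mF1
  have h4 : (∏' n : ℕ, (1 - (q : ℂ) ^ n * w))
      = (1 - (q : ℂ) ^ 0 * w) * ∏' n : ℕ, (1 - (q : ℂ) ^ (n + 1) * w) :=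
    tprod_eq_zero_mul' (f := fun n : ℕ => 1 - (q : ℂ) ^ n * w) mG1
  rw [h2, h1, h3, h4]
  push_cast
  ring

private lemma conj_tprod_unit {q : ℝ} (hq0 : 0 ≤ q) (hq1 : q < 1) {w : ℂ}
    (hw1 : q * ‖w‖ < 1) (hw2 : q * ‖w⁻¹‖ < 1)
    (hconj : (starRingEnd ℂ) w = w⁻¹) :
    (starRingEnd ℂ) (∏' n : ℕ, (1 - (q : ℂ) ^ (n + 1) * w) * (1 - (q : ℂ) ^ (n + 1) * w⁻¹))
      = ∏' n : ℕ, (1 - (q : ℂ) ^ (n + 1) * w) * (1 - (q : ℂ) ^ (n + 1) * w⁻¹) := by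
  have mf : Multipliable
      (fun n : ℕ => (1 - (q : ℂ) ^ (n + 1) * w) * (1 - (q : ℂ) ^ (n + 1) * w⁻¹)) :=
    (mult_aux hq0 hq1 _ hw1).mul (mult_aux hq0 hq1 _ hw2)
  rw [conj_tprod mf]
  refine tprod_congr fun n => ?_
  simp only [map_mul, map_sub, map_one, map_pow, map_inv₀, Complex.conj_ofReal, hconj, inv_inv]
  ring

private lemma cexp_conj (a b : ℝ) : (starRingEnd ℂ) (Complex.exp (↑a + ↑b * I)) =
    Complex.exp (↑a + ↑(-b) * I) := by
  rw [← Complex.exp_conj]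
  congr 1
  simp [map_add, map_mul, Complex.conj_ofReal, Complex.conj_I]

private lemma cexp_inv (a b : ℝ) : (Complex.exp (↑a + ↑b * I))⁻¹ =
    Complex.exp (↑(-a) + ↑(-b) * I) := by
  rw [← Complex.exp_neg]
  congr 1
  push_cast
  ring

private lemma cexp_norm (a b : ℝ) : ‖Complex.exp (↑a + ↑b * I)‖ = Real.exp a := by
  rw [Complex.norm_exp]
  congr 1
  simp

private lemma cexp_mul (a b a' b' : ℝ) : Complex.exp (↑a + ↑b * I) * Complex.exp (↑a' + ↑b' * I) =
    Complex.exp (↑(a + a') + ↑(b + b') * I) := by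
  rw [← Complex.exp_add]
  congr 1
  push_cast
  ring

/-- The Siegel function. -/
noncomputable def siegel (τ : ℂ) (r₁ r₂ : ℝ) : ℂ :=
  -Complex.exp (Real.pi * Complex.I * τ * ((r₁ : ℂ) ^ 2 - (r₁ : ℂ) + 1 / 6)) *
    Complex.exp (Real.pi * Complex.I * (r₂ : ℂ) * ((r₁ : ℂ) - 1)) *
    (1 - Complex.exp (2 * Real.pi * Complex.I * ((r₁ : ℂ) * τ + (r₂ : ℂ)))) *
    ∏' n : ℕ,
      ((1 - Complex.exp (2 * Real.pi * Complex.I * τ) ^ (n + 1) *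
          Complex.exp (2 * Real.pi * Complex.I * ((r₁ : ℂ) * τ + (r₂ : ℂ)))) *
        (1 - Complex.exp (2 * Real.pi * Complex.I * τ) ^ (n + 1) *
          (Complex.exp (2 * Real.pi * Complex.I * ((r₁ : ℂ) * τ + (r₂ : ℂ))))⁻¹))

/-- For `θ = iy` purely imaginary with `y > 0`, `N ≥ 2` and `t ∈ ℤ`, the number
`i · e^{tπi/(2N)} · g_{(1/2, t/N)}(θ) / g_{(0, 1/N)}(θ)` is real. -/
theorem stmt_5 (y : ℝ) (hy : 0 < y) (N : ℕ) (hN : 2 ≤ N) (t : ℤ) :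
    (Complex.I * Complex.exp ((t : ℂ) * Real.pi * Complex.I / (2 * N)) *
      siegel (Complex.I * (y : ℂ)) (1 / 2) ((t : ℝ) / N) /
      siegel (Complex.I * (y : ℂ)) 0 (1 / N)).im = 0 := by
  have hπ := Real.pi_pos
  set q : ℝ := Real.exp (-(2 * Real.pi * y)) with hqdef
  have hq0 : 0 < q := Real.exp_pos _
  have hq1 : q < 1 := Real.exp_lt_one_iff.2 (by nlinarith)
  simp only [siegel]
  have hQ : Complex.exp (2 * (Real.pi : ℂ) * Complex.I * (Complex.I * (y : ℂ))) = (q : ℂ) := by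
    rw [hqdef, Complex.ofReal_exp]
    congr 1
    push_cast
    linear_combination (2 * (Real.pi:ℂ) * y) * Complex.I_mul_I
  rw [hQ]
  have hz₁ : 2 * (Real.pi : ℂ) * Complex.I * ((((1:ℝ)/2 : ℝ) : ℂ) * (Complex.I * (y : ℂ)) + (((t : ℝ) / N : ℝ) : ℂ))
      = ((-(Real.pi * y) : ℝ) : ℂ) + ((2 * Real.pi * ((t : ℝ) / N) : ℝ) : ℂ) * Complex.I := by
    push_cast
    linear_combination ((Real.pi : ℂ) * y) * Complex.I_mul_I
  have hz₀ : 2 * (Real.pi : ℂ) * Complex.I * (((0:ℝ) : ℂ) * (Complex.I * (y : ℂ)) + (((1:ℝ) / N : ℝ) : ℂ))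
      = ((0 : ℝ) : ℂ) + ((2 * Real.pi * ((1:ℝ) / N) : ℝ) : ℂ) * Complex.I := by
    push_cast
    ring
  have he1 : (Real.pi : ℂ) * Complex.I * (Complex.I * (y : ℂ)) * ((((1:ℝ)/2 : ℝ) : ℂ) ^ 2 - (((1:ℝ)/2 : ℝ) : ℂ) + 1 / 6)
      = ((Real.pi * (y * (1/12)) : ℝ) : ℂ) := by
    push_cast
    linear_combination (-(Real.pi : ℂ) * y * (1/12)) * Complex.I_mul_I
  have he2 : (Real.pi : ℂ) * Complex.I * (((t : ℝ) / N : ℝ) : ℂ) * ((((1:ℝ)/2 : ℝ) : ℂ) - 1)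
      = ((0 : ℝ) : ℂ) + ((-(Real.pi * ((t : ℝ) / N) / 2) : ℝ) : ℂ) * Complex.I := by
    push_cast
    ring
  have he1' : (Real.pi : ℂ) * Complex.I * (Complex.I * (y : ℂ)) * ((((0:ℝ)) : ℂ) ^ 2 - (((0:ℝ)) : ℂ) + 1 / 6)
      = ((-(Real.pi * (y * (1/6))) : ℝ) : ℂ) := by
    push_cast
    linear_combination ((Real.pi : ℂ) * y * (1/6)) * Complex.I_mul_I
  have he2' : (Real.pi : ℂ) * Complex.I * (((1:ℝ) / N : ℝ) : ℂ) * ((((0:ℝ)) : ℂ) - 1)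
      = ((0 : ℝ) : ℂ) + ((-(Real.pi * ((1:ℝ) / N)) : ℝ) : ℂ) * Complex.I := by
    push_cast
    ring
  have hc : (t : ℂ) * (Real.pi : ℂ) * Complex.I / (2 * N)
      = ((0 : ℝ) : ℂ) + ((Real.pi * ((t : ℝ) / N) / 2 : ℝ) : ℂ) * Complex.I := by
    push_cast
    ring
  rw [hz₁, hz₀, he1, he2, he1', he2', hc]
  rw [show Complex.exp ((Real.pi * (y * (1/12)) : ℝ) : ℂ) = ((Real.exp (Real.pi * (y * (1/12))) : ℝ) : ℂ) from (Complex.ofReal_exp _).symm,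
      show Complex.exp ((-(Real.pi * (y * (1/6))) : ℝ) : ℂ) = ((Real.exp (-(Real.pi * (y * (1/6)))) : ℝ) : ℂ) from (Complex.ofReal_exp _).symm]
  -- abbreviations
  set w₁ : ℂ := Complex.exp (((-(Real.pi * y) : ℝ) : ℂ) + ((2 * Real.pi * ((t : ℝ) / N) : ℝ) : ℂ) * Complex.I) with hw₁def
  set w₀ : ℂ := Complex.exp (((0 : ℝ) : ℂ) + ((2 * Real.pi * ((1:ℝ) / N) : ℝ) : ℂ) * Complex.I) with hw₀def
  set e2 : ℂ := Complex.exp (((0 : ℝ) : ℂ) + ((-(Real.pi * ((t : ℝ) / N) / 2) : ℝ) : ℂ) * Complex.I) with he2def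
  set e2' : ℂ := Complex.exp (((0 : ℝ) : ℂ) + ((-(Real.pi * ((1:ℝ) / N)) : ℝ) : ℂ) * Complex.I) with he2'def
  set c : ℂ := Complex.exp (((0 : ℝ) : ℂ) + ((Real.pi * ((t : ℝ) / N) / 2 : ℝ) : ℂ) * Complex.I) with hcdef
  set E1 : ℝ := Real.exp (Real.pi * (y * (1/12))) with hE1def
  set E1' : ℝ := Real.exp (-(Real.pi * (y * (1/6)))) with hE1'def
  set P₁ : ℂ := ∏' n : ℕ, (1 - (q:ℂ)^(n+1) * w₁) * (1 - (q:ℂ)^(n+1) * w₁⁻¹) with hP₁def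
  set P₀ : ℂ := ∏' n : ℕ, (1 - (q:ℂ)^(n+1) * w₀) * (1 - (q:ℂ)^(n+1) * w₀⁻¹) with hP₀def
  -- basic facts about w₁
  have hconjw₁ : (starRingEnd ℂ) w₁ = (q : ℂ) * w₁⁻¹ := by
    rw [hw₁def, cexp_conj, cexp_inv, hqdef, Complex.ofReal_exp, ← Complex.exp_add]
    congr 1
    push_cast
    ring
  have hw1 : q * ‖w₁‖ < 1 := by
    rw [hw₁def, cexp_norm, hqdef, ← Real.exp_add]
    exact Real.exp_lt_one_iff.2 (by nlinarith)
  have hw2 : q * ‖w₁⁻¹‖ < 1 := by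
    rw [hw₁def, cexp_inv, cexp_norm, hqdef, ← Real.exp_add]
    exact Real.exp_lt_one_iff.2 (by nlinarith)
  have S := shift_id hq0 hq1 hw1 hw2 hconjw₁
  rw [← hP₁def] at S
  -- basic facts about w₀
  have hconjw₀ : (starRingEnd ℂ) w₀ = w₀⁻¹ := by
    rw [hw₀def, cexp_conj, cexp_inv]
    congr 2
    push_cast
    ring
  have hw0a : q * ‖w₀‖ < 1 := by
    rw [hw₀def, cexp_norm, Real.exp_zero, mul_one]; exact hq1
  have hw0b : q * ‖w₀⁻¹‖ < 1 := by
    rw [hw₀def, cexp_inv, cexp_norm, neg_zero, Real.exp_zero, mul_one]; exact hq1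
  have U := conj_tprod_unit hq0.le hq1 hw0a hw0b hconjw₀
  rw [← hP₀def] at U
  -- d and related facts
  obtain ⟨d, hd⟩ : ∃ d : ℂ, d = Complex.exp (((0 : ℝ) : ℂ) + ((Real.pi * ((t : ℝ) / N) : ℝ) : ℂ) * Complex.I) := ⟨_, rfl⟩
  have hde2 : (starRingEnd ℂ) e2 = d * e2 := by
    rw [hd, he2def, cexp_conj, cexp_mul]
    congr 1
    push_cast
    ring
  have hcd : (starRingEnd ℂ) c * d = c := by
    rw [hd, hcdef, cexp_conj, cexp_mul]
    congr 1
    push_cast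
    ring
  -- key identity for the denominator exp factors
  obtain ⟨u, hu⟩ : ∃ u : ℂ, u = Complex.exp (((0 : ℝ) : ℂ) + ((Real.pi * ((1:ℝ) / N) : ℝ) : ℂ) * Complex.I) := ⟨_, rfl⟩
  have hu0 : u ≠ 0 := by rw [hu]; exact Complex.exp_ne_zero _
  have hu2 : u * u = w₀ := by
    rw [hu, hw₀def, cexp_mul]
    congr 1
    push_cast
    ring
  have hue : e2' * u = 1 := by
    rw [hu, he2'def, cexp_mul]
    rw [show (((0:ℝ) + 0 : ℝ) : ℂ) + ((-(Real.pi * ((1:ℝ) / N)) + Real.pi * ((1:ℝ) / N) : ℝ) : ℂ) * Complex.I = 0 by push_cast; ring]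
    exact Complex.exp_zero
  have he2u : e2' = u⁻¹ := eq_inv_of_mul_eq_one_left hue
  have hcu : (starRingEnd ℂ) e2' = u := by
    rw [he2'def, cexp_conj, hu]
    congr 2
    push_cast
    ring
  have hkey : (starRingEnd ℂ) e2' * (1 - w₀⁻¹) = -(e2' * (1 - w₀)) := by
    rw [hcu, he2u, ← hu2]
    field_simp
    ring
  -- conjugation of numerator and denominator
  have hA : (starRingEnd ℂ) (-(E1:ℂ) * e2 * (1 - w₁) * P₁) = d * (-(E1:ℂ) * e2 * (1 - w₁) * P₁) := by
    rw [map_mul, map_mul, map_mul, map_neg, Complex.conj_ofReal, map_sub, map_one, hde2, hconjw₁]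
    linear_combination (-(E1:ℂ) * d * e2) * S
  have hB : (starRingEnd ℂ) (-(E1':ℂ) * e2' * (1 - w₀) * P₀) = -(-(E1':ℂ) * e2' * (1 - w₀) * P₀) := by
    rw [map_mul, map_mul, map_mul, map_neg, Complex.conj_ofReal, map_sub, map_one, hconjw₀, U]
    linear_combination (-(E1':ℂ) * P₀) * hkey
  rw [← Complex.conj_eq_iff_im, map_div₀, map_mul, hA, map_mul, Complex.conj_I, hB]
  rw [div_neg, ← neg_div]
  congr 1
  linear_combination (Complex.I * (-(E1:ℂ) * e2 * (1 - w₁) * P₁)) * hcd
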